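/- The integral I := ∫_{-∞}^0 e^{-u₂²} (∫₀^{u₂} e^{t₁²} (∫_{-∞}^{t₁} e^{-u₁²} du₁) dt₁) du₂ equals -(√π/4)·ln 2. -/

import Mathlib

open Real MeasureTheory intervalIntegral

open Set Filter Topology

noncomputable def gPhi (v : ℝ) : ℝ := ∫ u in Set.Iio v, Real.exp (-u ^ 2)

noncomputable def gG (s : ℝ) : ℝ := ∫ u in Set.Ioi s, Real.exp (-u ^ 2)

noncomputable def gM (v : ℝ) : ℝ := ∫ t in (0:ℝ)..v, Real.exp (t ^ 2) * gPhi t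

lemma integrable_gauss : Integrable (fun u : ℝ => Real.exp (-u ^ 2)) := by
  have := integrable_exp_neg_mul_sq (b := 1) one_pos
  simpa using this

lemma gG_zero : gG 0 = Real.sqrt π / 2 := by
  have := integral_gaussian_Ioi 1
  simp only [neg_mul, one_mul, div_one] at this
  simpa [gG] using this

lemma gPhi_eq_gG (v : ℝ) : gPhi v = gG (-v) := by
  have h : (∫ x in Iic v, Real.exp (-(-x) ^ 2)) = ∫ x in Ioi (-v), Real.exp (-x ^ 2) :=
    integral_comp_neg_Iic v (fun x => Real.exp (-x ^ 2))
  simp only [neg_sq] at h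
  rw [gPhi, gG, ← integral_Iic_eq_integral_Iio, h]

lemma gG_eq (s : ℝ) : gG s = Real.sqrt π / 2 - ∫ u in (0:ℝ)..s, Real.exp (-u ^ 2) := by
  have htot : (∫ u in Iic s, Real.exp (-u ^ 2)) + gG s = Real.sqrt π := by
    rw [gG, integral_Iic_add_Ioi integrable_gauss.integrableOn integrable_gauss.integrableOn]
    have := integral_gaussian 1
    simpa using this
  have hIic0 : (∫ u in Iic (0:ℝ), Real.exp (-u ^ 2)) = Real.sqrt π / 2 := by
    rw [integral_Iic_eq_integral_Iio]
    have := gPhi_eq_gG 0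
    rw [gPhi] at this
    rw [this, neg_zero, gG_zero]
  have hsub := integral_Iic_sub_Iic (f := fun u : ℝ => Real.exp (-u ^ 2)) (μ := volume)
    (a := (0:ℝ)) (b := s) integrable_gauss.integrableOn integrable_gauss.integrableOn
  rw [hIic0] at hsub
  have : (∫ u in Iic s, Real.exp (-u ^ 2))
      = Real.sqrt π / 2 + ∫ u in (0:ℝ)..s, Real.exp (-u ^ 2) := by linarith
  rw [this] at htot
  linarith


lemma gPhi_eq (v : ℝ) : gPhi v = Real.sqrt π / 2 + ∫ u in (0:ℝ)..v, Real.exp (-u ^ 2) := by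
  rw [gPhi_eq_gG, gG_eq]
  have h : (∫ u in (0:ℝ)..(-v), Real.exp (-u ^ 2)) = -∫ u in (0:ℝ)..v, Real.exp (-u ^ 2) := by
    have := intervalIntegral.integral_comp_neg (a := (0:ℝ)) (b := v)
      (f := fun u : ℝ => Real.exp (-u ^ 2))
    simp only [neg_sq, neg_zero] at this
    rw [intervalIntegral.integral_symm, ← this]
  rw [h]
  ring


lemma continuous_gG : Continuous gG := by
  have : Continuous fun s : ℝ => ∫ u in (0:ℝ)..s, Real.exp (-u ^ 2) :=
    intervalIntegral.continuous_primitive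
      (fun a b => integrable_gauss.intervalIntegrable) 0
  have h : Continuous fun s : ℝ => Real.sqrt π / 2 - ∫ u in (0:ℝ)..s, Real.exp (-u ^ 2) :=
    continuous_const.sub this
  exact h.congr fun s => (gG_eq s).symm


lemma continuous_gPhi : Continuous gPhi := by
  have h : Continuous fun v : ℝ => gG (-v) := continuous_gG.comp continuous_neg
  exact h.congr fun v => (gPhi_eq_gG v).symm


lemma hasDerivAt_gPhi (v : ℝ) : HasDerivAt gPhi (Real.exp (-v ^ 2)) v := by
  have hc : Continuous fun u : ℝ => Real.exp (-u ^ 2) := by continuity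
  have h : HasDerivAt (fun w : ℝ => ∫ u in (0:ℝ)..w, Real.exp (-u ^ 2))
      (Real.exp (-v ^ 2)) v :=
    intervalIntegral.integral_hasDerivAt_right
      (integrable_gauss.intervalIntegrable)
      (hc.stronglyMeasurableAtFilter _ _) hc.continuousAt
  have h2 := (hasDerivAt_const v (Real.sqrt π / 2)).add h
  simp only [zero_add] at h2
  exact h2.congr_of_eventuallyEq (Filter.Eventually.of_forall fun w => gPhi_eq w)


lemma hasDerivAt_gM (v : ℝ) : HasDerivAt gM (Real.exp (v ^ 2) * gPhi v) v := by
  have hc : Continuous fun t : ℝ => Real.exp (t ^ 2) * gPhi t :=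
    (Real.continuous_exp.comp (continuous_pow 2)).mul continuous_gPhi
  exact intervalIntegral.integral_hasDerivAt_right
    (hc.intervalIntegrable _ _)
    (hc.stronglyMeasurableAtFilter _ _) hc.continuousAt


lemma continuous_gM : Continuous gM := by
  have : Differentiable ℝ gM := fun v => (hasDerivAt_gM v).differentiableAt
  exact this.continuous

lemma gG_nonneg (s : ℝ) : 0 ≤ gG s :=
  setIntegral_nonneg measurableSet_Ioi fun u _ => (Real.exp_pos _).le

lemma gPhi_nonneg (v : ℝ) : 0 ≤ gPhi v := by
  rw [gPhi_eq_gG]; exact gG_nonneg _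

lemma integrableOn_mul_gauss (s : ℝ) :
    IntegrableOn (fun u : ℝ => u * Real.exp (-u ^ 2)) (Ioi s) := by
  have := integrable_mul_exp_neg_mul_sq (b := 1) one_pos
  simp only [neg_mul, one_mul] at this
  exact this.integrableOn

lemma tendsto_gauss_atTop : Tendsto (fun u : ℝ => Real.exp (-u ^ 2)) atTop (𝓝 0) := by
  have h1 : Tendsto (fun u : ℝ => u ^ 2) atTop atTop := tendsto_pow_atTop two_ne_zero
  exact (Real.tendsto_exp_neg_atTop_nhds_zero).comp h1

lemma hasDerivAt_neg_gauss (x : ℝ) :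
    HasDerivAt (fun u : ℝ => -(Real.exp (-u ^ 2) / 2)) (x * Real.exp (-x ^ 2)) x := by
  have h1 : HasDerivAt (fun u : ℝ => -u ^ 2) (-(2 * x)) x := by
    have := (hasDerivAt_pow 2 x).neg
    exact this.congr_deriv (by norm_num)
  have h2 := (h1.exp.div_const 2).neg
  refine h2.congr_deriv ?_
  ring

lemma integral_Ioi_mul_gauss (s : ℝ) :
    ∫ u in Ioi s, u * Real.exp (-u ^ 2) = Real.exp (-s ^ 2) / 2 := by
  have h := integral_Ioi_of_hasDerivAt_of_tendsto
    (f := fun u : ℝ => -(Real.exp (-u ^ 2) / 2))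
    (f' := fun u : ℝ => u * Real.exp (-u ^ 2)) (a := s) (m := 0)
    ((Continuous.neg ((Real.continuous_exp.comp (by continuity)).div_const 2)).continuousWithinAt)
    (fun x _ => hasDerivAt_neg_gauss x)
    (integrableOn_mul_gauss s) ?_
  · rw [h]; ring
  · have := (tendsto_gauss_atTop.div_const 2).neg
    simpa using this

lemma gG_mono (s : ℝ) (hs : 0 ≤ s) : gG s ≤ Real.sqrt π / 2 := by
  rw [← gG_zero]
  refine setIntegral_mono_set integrable_gauss.integrableOn
    (Filter.Eventually.of_forall fun u => (Real.exp_pos _).le) ?_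
  exact (Ioi_subset_Ioi hs).eventuallyLE

lemma gG_bound {s : ℝ} (hs : 0 < s) : gG s ≤ Real.exp (-s ^ 2) / (2 * s) := by
  have hmono : gG s ≤ ∫ u in Ioi s, s⁻¹ * (u * Real.exp (-u ^ 2)) := by
    refine setIntegral_mono_on integrable_gauss.integrableOn
      ((integrableOn_mul_gauss s).const_mul _) measurableSet_Ioi fun u hu => ?_
    have hu' : s ≤ u := (le_of_lt hu)
    have : 1 ≤ s⁻¹ * u := by
      rw [← div_eq_inv_mul]
      exact (one_le_div hs).2 hu'
    calc Real.exp (-u ^ 2) = 1 * Real.exp (-u ^ 2) := by ring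
      _ ≤ (s⁻¹ * u) * Real.exp (-u ^ 2) :=
          mul_le_mul_of_nonneg_right this (Real.exp_pos _).le
      _ = s⁻¹ * (u * Real.exp (-u ^ 2)) := by ring
  rw [MeasureTheory.integral_const_mul, integral_Ioi_mul_gauss] at hmono
  calc gG s ≤ s⁻¹ * (Real.exp (-s ^ 2) / 2) := hmono
    _ = Real.exp (-s ^ 2) / (2 * s) := by field_simp

lemma exp_gG_le {s : ℝ} (hs : 0 ≤ s) : Real.exp (s ^ 2) * gG s ≤ 3 := by
  rcases le_or_gt s (1/2) with h | h
  · have h1 : Real.exp (s ^ 2) ≤ Real.exp 1 := by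
      apply Real.exp_le_exp.2; nlinarith
    have h2 : gG s ≤ Real.sqrt π / 2 := gG_mono s hs
    have h3 : Real.sqrt π ≤ 2 := by
      rw [show (2:ℝ) = Real.sqrt 4 by
        rw [show (4:ℝ) = 2^2 by norm_num, Real.sqrt_sq]; norm_num]
      exact Real.sqrt_le_sqrt (by nlinarith [Real.pi_lt_d2])
    have h4 := Real.exp_one_lt_d9
    have h5 := gG_nonneg s
    nlinarith [Real.exp_pos (s ^ 2)]
  · have h1 : gG s ≤ Real.exp (-s ^ 2) / (2 * s) := gG_bound (by linarith)
    have key : Real.exp (s ^ 2) * Real.exp (-s ^ 2) = 1 := by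
      rw [← Real.exp_add, add_neg_cancel, Real.exp_zero]
    have h2 : Real.exp (s ^ 2) * (Real.exp (-s ^ 2) / (2 * s)) = 1 / (2 * s) := by
      rw [mul_div_assoc', key]
    calc Real.exp (s ^ 2) * gG s ≤ Real.exp (s ^ 2) * (Real.exp (-s ^ 2) / (2 * s)) :=
          mul_le_mul_of_nonneg_left h1 (Real.exp_pos _).le
      _ = 1 / (2 * s) := h2
      _ ≤ 3 := by rw [div_le_iff₀ (by linarith)]; nlinarith

lemma exp_gG_sq_le {s : ℝ} (hs : 0 ≤ s) :
    Real.exp (s ^ 2) * gG s ^ 2 ≤ 3 * Real.exp (-s ^ 2) := by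
  rcases le_or_gt s (1/2) with h | h
  · have h1 : Real.exp (s ^ 2) ≤ Real.exp 1 := by
      apply Real.exp_le_exp.2; nlinarith
    have h2 : gG s ^ 2 ≤ π / 4 := by
      have := gG_mono s hs
      have h5 := gG_nonneg s
      have : gG s ^ 2 ≤ (Real.sqrt π / 2) ^ 2 := by nlinarith
      calc gG s ^ 2 ≤ (Real.sqrt π / 2) ^ 2 := this
        _ = π / 4 := by rw [div_pow, Real.sq_sqrt Real.pi_pos.le]; norm_num
    have h3 : (3:ℝ)/4 ≤ Real.exp (-s ^ 2) := by
      have := Real.add_one_le_exp (-s ^ 2)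
      nlinarith
    have h4 := Real.exp_one_lt_d9
    have h6 := Real.pi_lt_d2
    nlinarith [Real.exp_pos (s ^ 2), gG_nonneg s, sq_nonneg (gG s)]
  · have hs' : (0:ℝ) < s := by linarith
    have h1 : gG s ≤ Real.exp (-s ^ 2) / (2 * s) := gG_bound hs'
    have h5 := gG_nonneg s
    have h2 : gG s ^ 2 ≤ (Real.exp (-s ^ 2) / (2 * s)) ^ 2 := by nlinarith
    have hE := Real.exp_pos (-s ^ 2)
    have key : Real.exp (s ^ 2) * Real.exp (-s ^ 2) = 1 := by
      rw [← Real.exp_add, add_neg_cancel, Real.exp_zero]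
    have hsq : (1:ℝ) ≤ 4 * s ^ 2 := by nlinarith
    calc Real.exp (s ^ 2) * gG s ^ 2
        ≤ Real.exp (s ^ 2) * (Real.exp (-s ^ 2) / (2 * s)) ^ 2 :=
          mul_le_mul_of_nonneg_left h2 (Real.exp_pos _).le
      _ = (Real.exp (s ^ 2) * Real.exp (-s ^ 2)) * Real.exp (-s ^ 2) / (4 * s ^ 2) := by
          field_simp; ring
      _ = Real.exp (-s ^ 2) / (4 * s ^ 2) := by rw [key, one_mul]
      _ ≤ 3 * Real.exp (-s ^ 2) := by
          rw [div_le_iff₀ (by nlinarith)]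
          nlinarith

lemma gM_bound {v : ℝ} (hv : v ≤ 0) : |gM v| ≤ 3 * |v| := by
  have h : ∀ x ∈ Set.uIoc (0:ℝ) v, ‖Real.exp (x ^ 2) * gPhi x‖ ≤ 3 := by
    intro x hx
    rw [Set.uIoc_of_ge hv] at hx
    have hx0 : x ≤ 0 := hx.2
    have hnn : 0 ≤ Real.exp (x ^ 2) * gPhi x :=
      mul_nonneg (Real.exp_pos _).le (gPhi_nonneg x)
    rw [Real.norm_eq_abs, abs_of_nonneg hnn, gPhi_eq_gG]
    have : Real.exp ((-x) ^ 2) * gG (-x) ≤ 3 := exp_gG_le (by linarith)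
    simpa using this
  have := intervalIntegral.norm_integral_le_of_norm_le_const (C := 3) h
  rw [Real.norm_eq_abs] at this
  calc |gM v| ≤ 3 * |v - 0| := this
    _ = 3 * |v| := by rw [sub_zero]

lemma integrableOn_f2 : IntegrableOn (fun s => Real.exp (s ^ 2) * gG s ^ 2) (Ioi (0:ℝ)) := by
  refine Integrable.mono' ((integrable_gauss.const_mul 3).integrableOn) ?_ ?_
  · exact ((Real.continuous_exp.comp (continuous_pow 2)).mul
      (continuous_gG.pow 2)).aestronglyMeasurable
  · filter_upwards [ae_restrict_mem measurableSet_Ioi] with s hs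
    have hnn : 0 ≤ Real.exp (s ^ 2) * gG s ^ 2 :=
      mul_nonneg (Real.exp_pos _).le (sq_nonneg _)
    rw [Real.norm_eq_abs, abs_of_nonneg hnn]
    exact exp_gG_sq_le (le_of_lt hs)

lemma integrableOn_f2' : IntegrableOn (fun v => Real.exp (v ^ 2) * gPhi v ^ 2) (Iic (0:ℝ)) := by
  refine Integrable.mono' ((integrable_gauss.const_mul 3).integrableOn) ?_ ?_
  · exact ((Real.continuous_exp.comp (continuous_pow 2)).mul
      (continuous_gPhi.pow 2)).aestronglyMeasurable
  · filter_upwards [ae_restrict_mem measurableSet_Iic] with v hv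
    have hnn : 0 ≤ Real.exp (v ^ 2) * gPhi v ^ 2 :=
      mul_nonneg (Real.exp_pos _).le (sq_nonneg _)
    rw [Real.norm_eq_abs, abs_of_nonneg hnn, gPhi_eq_gG]
    have := exp_gG_sq_le (s := -v) (by simpa using hv)
    simpa using this

lemma integrableOn_f1 : IntegrableOn (fun v => Real.exp (-v ^ 2) * gM v) (Iic (0:ℝ)) := by
  have hg : Integrable (fun v : ℝ => 3 * Real.exp (-(1/2) * v ^ 2)) :=
    (integrable_exp_neg_mul_sq (by norm_num : (0:ℝ) < 1/2)).const_mul 3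
  refine Integrable.mono' hg.integrableOn ?_ ?_
  · exact ((Real.continuous_exp.comp (by continuity)).mul continuous_gM).aestronglyMeasurable
  · filter_upwards [ae_restrict_mem measurableSet_Iic] with v hv
    rw [Real.norm_eq_abs, abs_mul, abs_of_nonneg (Real.exp_pos _).le]
    have h1 : |gM v| ≤ 3 * |v| := gM_bound hv
    have h2 : |v| ≤ Real.exp (v ^ 2 / 2) := by
      have := Real.add_one_le_exp (v ^ 2 / 2)
      nlinarith [sq_nonneg (|v| - 1), sq_abs v]
    have h3 : Real.exp (-v ^ 2) * Real.exp (v ^ 2 / 2) = Real.exp (-(1/2) * v ^ 2) := by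
      rw [← Real.exp_add]; congr 1; ring
    calc Real.exp (-v ^ 2) * |gM v| ≤ Real.exp (-v ^ 2) * (3 * |v|) :=
          mul_le_mul_of_nonneg_left h1 (Real.exp_pos _).le
      _ ≤ Real.exp (-v ^ 2) * (3 * Real.exp (v ^ 2 / 2)) := by
          have := mul_le_mul_of_nonneg_left h2 (by norm_num : (0:ℝ) ≤ 3)
          exact mul_le_mul_of_nonneg_left this (Real.exp_pos _).le
      _ = 3 * Real.exp (-(1/2) * v ^ 2) := by rw [← h3]; ring

lemma reflect_f2 :
    ∫ v in Iic (0:ℝ), Real.exp (v ^ 2) * gPhi v ^ 2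
      = ∫ s in Ioi (0:ℝ), Real.exp (s ^ 2) * gG s ^ 2 := by
  have h := integral_comp_neg_Iic (0:ℝ) (fun s => Real.exp (s ^ 2) * gG s ^ 2)
  rw [neg_zero] at h
  rw [← h]
  refine setIntegral_congr_fun measurableSet_Iic fun v _ => ?_
  simp only [neg_sq, gPhi_eq_gG]

lemma gPhi_bound {v : ℝ} (hv : v < 0) : gPhi v ≤ Real.exp (-v ^ 2) / (2 * (-v)) := by
  rw [gPhi_eq_gG]
  have := gG_bound (s := -v) (by linarith)
  simpa using this

lemma tendsto_prod_atBot : Tendsto (fun v => gPhi v * gM v) atBot (𝓝 0) := by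
  have hg : Tendsto (fun v : ℝ => (3/2) * Real.exp (-v ^ 2)) atBot (𝓝 0) := by
    have h1 : Tendsto (fun v : ℝ => Real.exp (-v ^ 2)) atBot (𝓝 0) := by
      have := tendsto_gauss_atTop.comp tendsto_neg_atBot_atTop
      simpa [Function.comp_def] using this
    simpa using h1.const_mul (3/2 : ℝ)
  refine squeeze_zero_norm' ?_ hg
  filter_upwards [Iic_mem_atBot (-1 : ℝ)] with v hv
  have hv0 : v < 0 := lt_of_le_of_lt hv (by norm_num)
  have h1 : gPhi v ≤ Real.exp (-v ^ 2) / (2 * (-v)) := gPhi_bound hv0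
  have h2 : |gM v| ≤ 3 * |v| := gM_bound hv0.le
  rw [Real.norm_eq_abs, abs_mul, abs_of_nonneg (gPhi_nonneg v)]
  have habs : |v| = -v := abs_of_neg hv0
  rw [habs] at h2
  have hEpos := Real.exp_pos (-v ^ 2)
  have hvpos : (0:ℝ) < -v := by linarith
  calc gPhi v * |gM v| ≤ (Real.exp (-v ^ 2) / (2 * (-v))) * (3 * (-v)) := by
        apply mul_le_mul h1 h2 (abs_nonneg _)
        positivity
    _ = (3/2) * Real.exp (-v ^ 2) := by
        rw [div_mul_eq_mul_div, div_eq_iff (ne_of_gt (by positivity : (0:ℝ) < 2 * -v))]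
        ring

lemma ibp :
    ∫ v in Iic (0:ℝ), Real.exp (-v ^ 2) * gM v
      = -∫ v in Iic (0:ℝ), Real.exp (v ^ 2) * gPhi v ^ 2 := by
  have hderiv : ∀ v : ℝ, HasDerivAt (fun w => gPhi w * gM w)
      (Real.exp (-v ^ 2) * gM v + Real.exp (v ^ 2) * gPhi v ^ 2) v := by
    intro v
    have h := (hasDerivAt_gPhi v).mul (hasDerivAt_gM v)
    refine h.congr_deriv ?_
    ring
  have hsum := integral_Iic_of_hasDerivAt_of_tendsto (a := (0:ℝ)) (m := 0)
    (f := fun w => gPhi w * gM w)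
    (f' := fun v => Real.exp (-v ^ 2) * gM v + Real.exp (v ^ 2) * gPhi v ^ 2)
    ((continuous_gPhi.mul continuous_gM).continuousWithinAt)
    (fun x _ => hderiv x)
    (integrableOn_f1.add integrableOn_f2')
    tendsto_prod_atBot
  have hM0 : gM 0 = 0 := intervalIntegral.integral_same
  simp only [hM0, mul_zero, sub_zero] at hsum
  rw [integral_add integrableOn_f1 integrableOn_f2'] at hsum
  linarith


section R3sec

private lemma R3haves : (∀ x ∈ Ioi (1:ℝ),
      HasDerivAt (fun x : ℝ => Real.log x - Real.log (x + 1)) ((x * (x + 1))⁻¹) x) ∧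
    (∀ x ∈ Ioi (1:ℝ), 0 ≤ (x * (x + 1))⁻¹) ∧
    Tendsto (fun x : ℝ => Real.log x - Real.log (x + 1)) atTop (𝓝 0) ∧
    ContinuousWithinAt (fun x : ℝ => Real.log x - Real.log (x + 1)) (Ici 1) 1 := by
  have hderiv : ∀ x ∈ Ioi (1:ℝ),
      HasDerivAt (fun x : ℝ => Real.log x - Real.log (x + 1)) ((x * (x + 1))⁻¹) x := by
    intro x hx
    have hx0 : (0:ℝ) < x := lt_trans one_pos hx
    have h1 : HasDerivAt Real.log x⁻¹ x := Real.hasDerivAt_log (ne_of_gt hx0)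
    have h2 : HasDerivAt (fun x : ℝ => Real.log (x + 1)) (x + 1)⁻¹ x := by
      have hid : HasDerivAt (fun x : ℝ => x + 1) 1 x := (hasDerivAt_id x).add_const 1
      have := (Real.hasDerivAt_log (by linarith : x + 1 ≠ 0)).comp x hid
      exact this.congr_deriv (mul_one _)
    have h := h1.sub h2
    refine h.congr_deriv ?_
    field_simp
    ring
  have hpos : ∀ x ∈ Ioi (1:ℝ), 0 ≤ (x * (x + 1))⁻¹ := by
    intro x hx
    have hx0 : (0:ℝ) < x := lt_trans one_pos hx
    positivity
  have htend : Tendsto (fun x : ℝ => Real.log x - Real.log (x + 1)) atTop (𝓝 0) := by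
    have h1 : Tendsto (fun x : ℝ => (x + 1) / x) atTop (𝓝 1) := by
      have := tendsto_const_nhds.div_atTop (a := (1:ℝ)) tendsto_id
      have h2 := this.const_add (1:ℝ)
      have h3 : Tendsto (fun x : ℝ => 1 + 1 / x) atTop (𝓝 1) := by simpa using h2
      refine h3.congr' ?_
      filter_upwards [eventually_gt_atTop (0:ℝ)] with x hx
      field_simp
    have h2 : Tendsto (fun x : ℝ => Real.log ((x + 1) / x)) atTop (𝓝 0) := by
      have := (Real.continuousAt_log (by norm_num : (1:ℝ) ≠ 0)).tendsto.comp h1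
      simpa [Function.comp_def] using this
    have h3 : Tendsto (fun x : ℝ => -Real.log ((x + 1) / x)) atTop (𝓝 0) := by
      simpa using h2.neg
    refine h3.congr' ?_
    filter_upwards [eventually_gt_atTop (0:ℝ)] with x hx
    rw [Real.log_div (by linarith) (ne_of_gt hx)]
    ring
  have hcont : ContinuousWithinAt (fun x : ℝ => Real.log x - Real.log (x + 1)) (Ici 1) 1 := by
    apply ContinuousAt.continuousWithinAt
    exact (Real.continuousAt_log one_ne_zero).sub
      ((Real.continuousAt_log (by norm_num)).comp (by fun_prop))
  exact ⟨hderiv, hpos, htend, hcont⟩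

lemma R3 : ∫ x in Ioi (1:ℝ), (x * (x + 1))⁻¹ = Real.log 2 := by
  obtain ⟨hderiv, hpos, htend, hcont⟩ := R3haves
  have h := integral_Ioi_of_hasDerivAt_of_nonneg hcont hderiv hpos htend
  rw [h]
  norm_num

lemma R3int : IntegrableOn (fun x : ℝ => (x * (x + 1))⁻¹) (Ioi 1) := by
  obtain ⟨hderiv, hpos, htend, hcont⟩ := R3haves
  exact integrableOn_Ioi_deriv_of_nonneg hcont hderiv hpos htend

end R3sec

lemma R3' : IntegrableOn (fun x : ℝ => Real.sqrt π / 4 * (x * (x + 1))⁻¹) (Ioi 1) :=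
  R3int.const_mul _

section R2sec

variable {x : ℝ}

private lemma R2haves (hx : 1 < x) :
    (∀ y ∈ Ioi (1:ℝ),
      HasDerivAt (fun y : ℝ => Real.sqrt π / 4 * (x^2 - 1)⁻¹ * (y / Real.sqrt (y^2 + (x^2 - 1))))
        (Real.sqrt π / (4 * ((x^2 + y^2 - 1) * Real.sqrt (x^2 + y^2 - 1)))) y) ∧
    (∀ y ∈ Ioi (1:ℝ),
      0 ≤ Real.sqrt π / (4 * ((x^2 + y^2 - 1) * Real.sqrt (x^2 + y^2 - 1)))) ∧
    Tendsto (fun y : ℝ => Real.sqrt π / 4 * (x^2 - 1)⁻¹ * (y / Real.sqrt (y^2 + (x^2 - 1))))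
      atTop (𝓝 (Real.sqrt π / 4 * (x^2 - 1)⁻¹)) ∧
    ContinuousWithinAt
      (fun y : ℝ => Real.sqrt π / 4 * (x^2 - 1)⁻¹ * (y / Real.sqrt (y^2 + (x^2 - 1))))
      (Ici 1) 1 := by
  have hd : (0:ℝ) < x^2 - 1 := by nlinarith
  set d := x^2 - 1 with hdef
  refine ⟨?_, ?_, ?_, ?_⟩
  · intro y _
    have hS : (0:ℝ) < y^2 + d := by positivity
    have hsqS : (0:ℝ) < Real.sqrt (y^2 + d) := Real.sqrt_pos.2 hS
    have hsq : Real.sqrt (y^2 + d) ^ 2 = y^2 + d := Real.sq_sqrt hS.le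
    have h1 : HasDerivAt (fun y : ℝ => y^2 + d) (2*y) y := by
      simpa using (hasDerivAt_pow 2 y).add_const d
    have h2 : HasDerivAt (fun y : ℝ => Real.sqrt (y^2 + d))
        (2*y / (2 * Real.sqrt (y^2 + d))) y := h1.sqrt (ne_of_gt hS)
    have h4 := (hasDerivAt_id y).div h2 (ne_of_gt hsqS)
    have h5 := h4.const_mul (Real.sqrt π / 4 * d⁻¹)
    refine h5.congr_deriv ?_
    have hxy : x^2 + y^2 - 1 = y^2 + d := by rw [hdef]; ring
    rw [hxy]
    rw [id_eq]
    field_simp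
    have h2s : Real.sqrt (y^2+d) * Real.sqrt (y^2+d) = y^2 + d := Real.mul_self_sqrt hS.le
    rw [hsq]
    ring
  · intro y hy
    have hS : (0:ℝ) < x^2 + y^2 - 1 := by nlinarith [mem_Ioi.1 hy]
    positivity
  · have hS1 : Tendsto (fun y : ℝ => y^2 + d) atTop atTop :=
      tendsto_atTop_add_const_right atTop d (tendsto_pow_atTop two_ne_zero)
    have h0 : Tendsto (fun y : ℝ => d / (y^2 + d)) atTop (𝓝 0) :=
      tendsto_const_nhds.div_atTop hS1
    have h1 : Tendsto (fun y : ℝ => 1 - d/(y^2+d)) atTop (𝓝 1) := by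
      have := (tendsto_const_nhds : Tendsto (fun _ : ℝ => (1:ℝ)) atTop (𝓝 1)).sub h0
      simpa using this
    have h2 : Tendsto (fun y : ℝ => Real.sqrt (1 - d/(y^2+d))) atTop (𝓝 1) := by
      have := Real.continuous_sqrt.continuousAt.tendsto.comp h1
      simpa [Function.comp_def] using this
    have h3 : Tendsto (fun y : ℝ => y / Real.sqrt (y^2 + d)) atTop (𝓝 1) := by
      refine h2.congr' ?_
      filter_upwards [eventually_gt_atTop (0:ℝ)] with y hy
      have hS : (0:ℝ) < y^2 + d := by positivity
      have : 1 - d/(y^2+d) = y^2/(y^2+d) := by field_simp; ring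
      rw [this, Real.sqrt_div (sq_nonneg y), Real.sqrt_sq hy.le]
    have := h3.const_mul (Real.sqrt π / 4 * d⁻¹)
    simpa using this
  · apply ContinuousAt.continuousWithinAt
    have hS1 : (0:ℝ) < (1:ℝ)^2 + d := by positivity
    refine continuousAt_const.mul (ContinuousAt.div continuousAt_id ?_ ?_)
    · exact Real.continuous_sqrt.continuousAt.comp (by fun_prop)
    · exact ne_of_gt (Real.sqrt_pos.2 (by simpa using hS1))

lemma R2 (hx : 1 < x) :
    ∫ y in Ioi (1:ℝ),
      Real.sqrt π / (4 * ((x^2 + y^2 - 1) * Real.sqrt (x^2 + y^2 - 1)))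
      = Real.sqrt π / 4 * (x * (x + 1))⁻¹ := by
  obtain ⟨hderiv, hpos, htend, hcont⟩ := R2haves hx
  have h := integral_Ioi_of_hasDerivAt_of_nonneg hcont hderiv hpos htend
  rw [h]
  have hx0 : (0:ℝ) < x := lt_trans one_pos hx
  have h1d : (1:ℝ)^2 + (x^2 - 1) = x^2 := by ring
  rw [h1d, Real.sqrt_sq hx0.le]
  have hd : (0:ℝ) < x^2 - 1 := by nlinarith
  field_simp
  ring

lemma R2' (hx : 1 < x) :
    IntegrableOn (fun y : ℝ =>
      Real.sqrt π / (4 * ((x^2 + y^2 - 1) * Real.sqrt (x^2 + y^2 - 1)))) (Ioi 1) := by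
  obtain ⟨hderiv, hpos, htend, hcont⟩ := R2haves hx
  exact integrableOn_Ioi_deriv_of_nonneg hcont hderiv hpos htend

end R2sec

lemma R1' {c : ℝ} (hc : 0 < c) :
    IntegrableOn (fun s : ℝ => s^2 * Real.exp (-c * s^2)) (Ioi 0) := by
  have h := integrableOn_rpow_mul_exp_neg_mul_sq hc (by norm_num : (-1:ℝ) < 2)
  refine h.congr_fun (fun s hs => ?_) measurableSet_Ioi
  dsimp only
  rw [show ((2:ℝ) = ((2:ℕ):ℝ)) by norm_num, Real.rpow_natCast]

lemma R1 {c : ℝ} (hc : 0 < c) :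
    ∫ s in Ioi (0:ℝ), s^2 * Real.exp (-c * s^2)
      = Real.sqrt π / (4 * (c * Real.sqrt c)) := by
  have hA : ∀ s : ℝ, HasDerivAt (fun s : ℝ => -(s * Real.exp (-c * s^2) / (2*c)))
      (s^2 * Real.exp (-c * s^2) - Real.exp (-c * s^2) / (2*c)) s := by
    intro s
    have h1 : HasDerivAt (fun s : ℝ => -c * s^2) (-c * (2*s)) s := by
      have := (hasDerivAt_pow 2 s).const_mul (-c)
      simpa [mul_comm] using this
    have h2 := h1.exp
    have h3 := (hasDerivAt_id s).mul h2
    have h4 := (h3.div_const (2*c)).neg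
    refine h4.congr_deriv ?_
    field_simp
    simp only [id_eq]
    ring
  have htend : Tendsto (fun s : ℝ => -(s * Real.exp (-c * s^2) / (2*c))) atTop (𝓝 0) := by
    have hg : Tendsto (fun s : ℝ => (1/c^2) * Real.exp (-(c/2) * s^2)) atTop (𝓝 0) := by
      have h1 : Tendsto (fun s : ℝ => (c/2) * s^2) atTop atTop :=
        (tendsto_pow_atTop two_ne_zero).const_mul_atTop (by positivity)
      have h2 : Tendsto (fun s : ℝ => Real.exp (-((c/2) * s^2))) atTop (𝓝 0) :=
        Real.tendsto_exp_neg_atTop_nhds_zero.comp h1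
      have h3 := h2.const_mul (1/c^2 : ℝ)
      simpa [neg_mul] using h3
    refine squeeze_zero_norm' ?_ hg
    filter_upwards [eventually_ge_atTop (1:ℝ)] with s hs
    have hs0 : (0:ℝ) < s := lt_of_lt_of_le one_pos hs
    have hEpos := Real.exp_pos (-c * s^2)
    have h1 : s ≤ (2/c) * Real.exp ((c/2) * s^2) := by
      have h2 : s ≤ s^2 := by nlinarith
      have h3 := Real.add_one_le_exp ((c/2) * s^2)
      have h4 : (c/2) * s^2 ≤ Real.exp ((c/2) * s^2) := by linarith
      calc s ≤ s^2 := h2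
        _ ≤ (2/c) * ((c/2) * s^2) := by
            rw [show (2/c) * ((c/2) * s^2) = s^2 by field_simp]
        _ ≤ (2/c) * Real.exp ((c/2) * s^2) := by
            apply mul_le_mul_of_nonneg_left h4 (by positivity)
    have hkey : Real.exp ((c/2) * s^2) * Real.exp (-c * s^2) = Real.exp (-(c/2) * s^2) := by
      rw [← Real.exp_add]; congr 1; ring
    rw [Real.norm_eq_abs, abs_neg, abs_div, abs_of_nonneg (by positivity),
      abs_of_nonneg (by positivity : (0:ℝ) ≤ 2*c)]
    calc s * Real.exp (-c * s^2) / (2*c)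
        ≤ ((2/c) * Real.exp ((c/2) * s^2)) * Real.exp (-c * s^2) / (2*c) := by
          apply div_le_div_of_nonneg_right ?_ (by positivity)
          exact mul_le_mul_of_nonneg_right h1 hEpos.le
      _ = (1/c^2) * (Real.exp ((c/2) * s^2) * Real.exp (-c * s^2)) := by
          field_simp
      _ = (1/c^2) * Real.exp (-(c/2) * s^2) := by rw [hkey]
  have hint2 : IntegrableOn (fun s : ℝ => Real.exp (-c * s^2) / (2*c)) (Ioi 0) :=
    ((integrable_exp_neg_mul_sq hc).integrableOn).div_const _
  have hint : IntegrableOn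
      (fun s : ℝ => s^2 * Real.exp (-c * s^2) - Real.exp (-c * s^2) / (2*c)) (Ioi 0) :=
    (R1' hc).sub hint2
  have h := integral_Ioi_of_hasDerivAt_of_tendsto (a := (0:ℝ)) (m := 0)
    (f := fun s : ℝ => -(s * Real.exp (-c * s^2) / (2*c)))
    (f' := fun s : ℝ => s^2 * Real.exp (-c * s^2) - Real.exp (-c * s^2) / (2*c))
    ((hA 0).continuousAt.continuousWithinAt) (fun x _ => hA x) hint htend
  simp only [zero_mul, zero_div, neg_zero, sub_zero, zero_pow, mul_zero] at h
  rw [integral_sub (R1' hc) hint2] at h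
  have hgauss : ∫ s in Ioi (0:ℝ), Real.exp (-c * s^2) / (2*c)
      = Real.sqrt π / (4 * (c * Real.sqrt c)) := by
    rw [MeasureTheory.integral_div, integral_gaussian_Ioi, Real.sqrt_div Real.pi_pos.le]
    have hsc : (0:ℝ) < Real.sqrt c := Real.sqrt_pos.2 hc
    rw [div_div, div_div]
    congr 1
    ring
  have h0 : (0:ℝ) - -(0 * Real.exp (-c * 0^2) / (2*c)) = 0 := by ring
  rw [hgauss] at h
  linarith [h, hgauss]

lemma gG_scaled {s : ℝ} (hs : 0 < s) :
    ∫ x in Ioi (1:ℝ), Real.exp (-(s*x)^2) = gG s / s := by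
  have h := integral_comp_mul_left_Ioi (fun u => Real.exp (-u^2)) 1 hs
  simp only [smul_eq_mul, mul_one] at h
  rw [h, gG, inv_mul_eq_div]

lemma int_scaled {s : ℝ} (hs : 0 < s) :
    IntegrableOn (fun x : ℝ => Real.exp (-(s*x)^2)) (Ioi 1) := by
  have h := (integrable_exp_neg_mul_sq (show (0:ℝ) < s^2 by positivity)).integrableOn
    (s := Ioi (1:ℝ))
  refine h.congr_fun (fun x _ => ?_) measurableSet_Ioi
  congr 1
  ring

lemma P1 {s : ℝ} (hs : 0 < s) :
    ENNReal.ofReal (Real.exp (s^2) * gG s^2)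
      = ∫⁻ x in Ioi (1:ℝ), ∫⁻ y in Ioi (1:ℝ),
          ENNReal.ofReal (s^2 * Real.exp (s^2) * Real.exp (-(s*x)^2) * Real.exp (-(s*y)^2)) := by
  have hGnn : 0 ≤ gG s / s := div_nonneg (gG_nonneg s) hs.le
  have hexpnn : ∀ t : ℝ, (0:ℝ) ≤ Real.exp t := fun t => (Real.exp_pos t).le
  have hofG : ∫⁻ y in Ioi (1:ℝ), ENNReal.ofReal (Real.exp (-(s*y)^2))
      = ENNReal.ofReal (gG s / s) := by
    rw [← ofReal_integral_eq_lintegral_ofReal (int_scaled hs)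
      (Filter.Eventually.of_forall fun y => hexpnn _), gG_scaled hs]
  have hinner : ∀ x : ℝ,
      (∫⁻ y in Ioi (1:ℝ), ENNReal.ofReal
          (s^2 * Real.exp (s^2) * Real.exp (-(s*x)^2) * Real.exp (-(s*y)^2)))
        = ENNReal.ofReal (s^2 * Real.exp (s^2) * Real.exp (-(s*x)^2))
          * ENNReal.ofReal (gG s / s) := by
    intro x
    have h1 : ∀ y : ℝ, ENNReal.ofReal
        (s^2 * Real.exp (s^2) * Real.exp (-(s*x)^2) * Real.exp (-(s*y)^2))
        = ENNReal.ofReal (s^2 * Real.exp (s^2) * Real.exp (-(s*x)^2))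
          * ENNReal.ofReal (Real.exp (-(s*y)^2)) := fun y => by
      rw [← ENNReal.ofReal_mul (by positivity)]
    simp_rw [fun y => h1 y]
    rw [lintegral_const_mul' _ _ ENNReal.ofReal_ne_top, hofG]
  simp_rw [hinner]
  rw [lintegral_mul_const' _ _ ENNReal.ofReal_ne_top]
  have houter : (∫⁻ x in Ioi (1:ℝ),
      ENNReal.ofReal (s^2 * Real.exp (s^2) * Real.exp (-(s*x)^2)))
      = ENNReal.ofReal (s^2 * Real.exp (s^2)) * ENNReal.ofReal (gG s / s) := by
    have h1 : ∀ x : ℝ, ENNReal.ofReal (s^2 * Real.exp (s^2) * Real.exp (-(s*x)^2))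
        = ENNReal.ofReal (s^2 * Real.exp (s^2)) * ENNReal.ofReal (Real.exp (-(s*x)^2)) :=
      fun x => by rw [← ENNReal.ofReal_mul (by positivity)]
    simp_rw [fun x => h1 x]
    rw [lintegral_const_mul' _ _ ENNReal.ofReal_ne_top, hofG]
  rw [houter]
  rw [← ENNReal.ofReal_mul (by positivity), ← ENNReal.ofReal_mul (by positivity)]
  congr 1
  field_simp

lemma key_K : ∫ s in Ioi (0:ℝ), Real.exp (s ^ 2) * gG s ^ 2
    = Real.sqrt π / 4 * Real.log 2 := by
  have hnn : 0 ≤ᵐ[volume.restrict (Ioi (0:ℝ))] fun s => Real.exp (s ^ 2) * gG s ^ 2 :=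
    Filter.Eventually.of_forall fun s => mul_nonneg (Real.exp_pos _).le (sq_nonneg _)
  have hms : AEStronglyMeasurable (fun s => Real.exp (s ^ 2) * gG s ^ 2)
      (volume.restrict (Ioi (0:ℝ))) :=
    ((Real.continuous_exp.comp (continuous_pow 2)).mul
      (continuous_gG.pow 2)).aestronglyMeasurable
  rw [integral_eq_lintegral_of_nonneg_ae hnn hms]
  have hcontF : Continuous (fun p : (ℝ × ℝ) × ℝ =>
      p.1.1^2 * Real.exp (p.1.1^2) * Real.exp (-(p.1.1*p.1.2)^2)
        * Real.exp (-(p.1.1*p.2)^2)) := by fun_prop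
  have hL : (∫⁻ s in Ioi (0:ℝ), ENNReal.ofReal (Real.exp (s ^ 2) * gG s ^ 2))
      = ENNReal.ofReal (Real.sqrt π / 4 * Real.log 2) := by
    have step1 : (∫⁻ s in Ioi (0:ℝ), ENNReal.ofReal (Real.exp (s ^ 2) * gG s ^ 2))
        = ∫⁻ s in Ioi (0:ℝ), ∫⁻ x in Ioi (1:ℝ), ∫⁻ y in Ioi (1:ℝ),
            ENNReal.ofReal (s^2 * Real.exp (s^2) * Real.exp (-(s*x)^2)
              * Real.exp (-(s*y)^2)) := by
      refine setLIntegral_congr_fun measurableSet_Ioi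
        (fun s hs => ?_)
      exact P1 hs
    rw [step1]
    have swap1 : (∫⁻ s in Ioi (0:ℝ), ∫⁻ x in Ioi (1:ℝ), ∫⁻ y in Ioi (1:ℝ),
            ENNReal.ofReal (s^2 * Real.exp (s^2) * Real.exp (-(s*x)^2)
              * Real.exp (-(s*y)^2)))
        = ∫⁻ x in Ioi (1:ℝ), ∫⁻ s in Ioi (0:ℝ), ∫⁻ y in Ioi (1:ℝ),
            ENNReal.ofReal (s^2 * Real.exp (s^2) * Real.exp (-(s*x)^2)
              * Real.exp (-(s*y)^2)) := by
      apply lintegral_lintegral_swap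
      apply Measurable.aemeasurable
      apply Measurable.lintegral_prod_right'
        (f := fun (p : (ℝ × ℝ) × ℝ) => ENNReal.ofReal
          (p.1.1^2 * Real.exp (p.1.1^2) * Real.exp (-(p.1.1*p.1.2)^2)
            * Real.exp (-(p.1.1*p.2)^2)))
      exact ENNReal.measurable_ofReal.comp hcontF.measurable
    rw [swap1]
    have swap2 : ∀ x : ℝ, (∫⁻ s in Ioi (0:ℝ), ∫⁻ y in Ioi (1:ℝ),
            ENNReal.ofReal (s^2 * Real.exp (s^2) * Real.exp (-(s*x)^2)
              * Real.exp (-(s*y)^2)))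
        = ∫⁻ y in Ioi (1:ℝ), ∫⁻ s in Ioi (0:ℝ),
            ENNReal.ofReal (s^2 * Real.exp (s^2) * Real.exp (-(s*x)^2)
              * Real.exp (-(s*y)^2)) := by
      intro x
      apply lintegral_lintegral_swap
      apply Measurable.aemeasurable
      have hc : Continuous (fun p : ℝ × ℝ =>
          p.1^2 * Real.exp (p.1^2) * Real.exp (-(p.1*x)^2) * Real.exp (-(p.1*p.2)^2)) := by
        fun_prop
      exact ENNReal.measurable_ofReal.comp hc.measurable
    have inner_eq : ∀ x ∈ Ioi (1:ℝ), ∀ y ∈ Ioi (1:ℝ),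
        (∫⁻ s in Ioi (0:ℝ), ENNReal.ofReal (s^2 * Real.exp (s^2) * Real.exp (-(s*x)^2)
              * Real.exp (-(s*y)^2)))
          = ENNReal.ofReal (Real.sqrt π /
              (4 * ((x^2 + y^2 - 1) * Real.sqrt (x^2 + y^2 - 1)))) := by
      intro x hx y hy
      have hx1 : (1:ℝ) < x := hx
      have hy1 : (1:ℝ) < y := hy
      have hc : (0:ℝ) < x^2 + y^2 - 1 := by nlinarith
      have hrw : ∀ s : ℝ, s^2 * Real.exp (s^2) * Real.exp (-(s*x)^2) * Real.exp (-(s*y)^2)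
          = s^2 * Real.exp (-(x^2 + y^2 - 1) * s^2) := by
        intro s
        have h1 : Real.exp (s^2) * Real.exp (-(s*x)^2) * Real.exp (-(s*y)^2)
            = Real.exp (-(x^2 + y^2 - 1) * s^2) := by
          rw [← Real.exp_add, ← Real.exp_add]
          congr 1
          ring
        calc s^2 * Real.exp (s^2) * Real.exp (-(s*x)^2) * Real.exp (-(s*y)^2)
            = s^2 * (Real.exp (s^2) * Real.exp (-(s*x)^2) * Real.exp (-(s*y)^2)) := by ring
          _ = s^2 * Real.exp (-(x^2 + y^2 - 1) * s^2) := by rw [h1]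
      simp_rw [fun s => hrw s]
      rw [← ofReal_integral_eq_lintegral_ofReal (R1' hc)
        (Filter.Eventually.of_forall fun s =>
          mul_nonneg (sq_nonneg s) (Real.exp_pos _).le), R1 hc]
    have mid_eq : ∀ x ∈ Ioi (1:ℝ),
        (∫⁻ y in Ioi (1:ℝ), ENNReal.ofReal (Real.sqrt π /
            (4 * ((x^2 + y^2 - 1) * Real.sqrt (x^2 + y^2 - 1)))))
          = ENNReal.ofReal (Real.sqrt π / 4 * (x * (x + 1))⁻¹) := by
      intro x hx
      have hx1 : (1:ℝ) < x := hx
      rw [← ofReal_integral_eq_lintegral_ofReal (R2' hx1)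
        (Filter.Eventually.of_forall fun y => by
          have h : (0:ℝ) ≤ x^2 + y^2 - 1 := by nlinarith
          exact div_nonneg (Real.sqrt_nonneg _) (by positivity)), R2 hx1]
    calc (∫⁻ x in Ioi (1:ℝ), ∫⁻ s in Ioi (0:ℝ), ∫⁻ y in Ioi (1:ℝ),
            ENNReal.ofReal (s^2 * Real.exp (s^2) * Real.exp (-(s*x)^2)
              * Real.exp (-(s*y)^2)))
        = ∫⁻ x in Ioi (1:ℝ), ENNReal.ofReal (Real.sqrt π / 4 * (x * (x + 1))⁻¹) := by
          refine setLIntegral_congr_fun measurableSet_Ioi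
            (fun x hx => ?_)
          rw [swap2 x]
          rw [setLIntegral_congr_fun measurableSet_Ioi
            (fun y hy => inner_eq x hx y hy)]
          exact mid_eq x hx
      _ = ENNReal.ofReal (Real.sqrt π / 4 * Real.log 2) := by
          rw [← ofReal_integral_eq_lintegral_ofReal R3'
            ((ae_restrict_mem measurableSet_Ioi).mono fun x hx => by
              have hx1 : (1:ℝ) < x := hx
              have hx0 : (0:ℝ) < x := lt_trans one_pos hx1
              positivity)]
          rw [MeasureTheory.integral_const_mul, R3]
  rw [hL, ENNReal.toReal_ofReal (by positivity)]


theorem triple_integral_eq_neg_sqrt_pi_div_four_mul_log_two :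
    (∫ u₂ in Set.Iio (0 : ℝ),
        Real.exp (-u₂ ^ 2) *
          ∫ t₁ in (0 : ℝ)..u₂,
            Real.exp (t₁ ^ 2) * ∫ u₁ in Set.Iio t₁, Real.exp (-u₁ ^ 2))
      = -(Real.sqrt π / 4) * Real.log 2 := by
  have h : (∫ u₂ in Set.Iio (0 : ℝ), Real.exp (-u₂ ^ 2) * gM u₂)
      = -(Real.sqrt π / 4) * Real.log 2 := by
    rw [← integral_Iic_eq_integral_Iio, ibp, reflect_f2, key_K]
    ring
  exact h
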